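/- Core dissipation inequality for the delayed feedback (heart of the proof of Theorem 2.3). Let τ > 0, 1 ≤ p < ∞, λ₀, λ ∈ L^∞(ℝ), α₀ > 0 with λ₀(x) ≥ α₀ a.e., and let α ≥ 0 and a nonnegative β ∈ L^p(ℝ) satisfy ((e^τ + 1)/2)·|λ(x)| ≤ α + β(x) for a.e. x ∈ ℝ. Let v : ℝ → ℝ be differentiable with v, v' ∈ L²(ℝ), and let w ∈ L²(ℝ). Then −∫_ℝ (v'(x))² dx − ∫_ℝ λ₀(x)·v(x)² dx − ∫_ℝ λ(x)·w(x)·v(x) dx + (1/2)∫_ℝ |λ(x)|·v(x)² dx − (e^{−τ}/2)∫_ℝ |λ(x)|·w(x)² dx ≤ −( α₀ − α − c_p·‖β‖_p^{2p/(2p−1)} )·∫_ℝ v(x)² dx, where c_p := (1 − 1/(2p))·(2/p)^{1/(2p−1)}. -/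

import Mathlib

open MeasureTheory
open scoped ENNReal

/-- The constant `c_p = (1 - 1/(2p)) (2/p)^{1/(2p-1)}`. -/
noncomputable def cp (p : ℝ) : ℝ := (1 - 1 / (2 * p)) * (2 / p) ^ ((1 : ℝ) / (2 * p - 1))

/-- The `L^r(ℝ)` norm of a function, for `1 ≤ r < ∞`. -/
noncomputable def Lpnorm (r : ℝ) (f : ℝ → ℝ) : ℝ :=
  (eLpNorm f (ENNReal.ofReal r) volume).toReal

theorem gn_bound (v : ℝ → ℝ) (hv : Differentiable ℝ v)
    (hv2 : MemLp v 2 (volume : Measure ℝ))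
    (hv'2 : MemLp (deriv v) 2 (volume : Measure ℝ)) (x : ℝ) :
    v x ^ 2 ≤ ∫ y : ℝ, |2 * v y * deriv v y| := by
  have hmeas : AEStronglyMeasurable (fun y : ℝ => 2 * v y * deriv v y) volume :=
    ((hv.continuous.aestronglyMeasurable.mul hv'2.1).const_mul 2).congr
      (Filter.EventuallyEq.of_eq (by funext y; simp [Pi.mul_apply]; ring))
  have hvv' : Integrable (fun y : ℝ => 2 * v y * deriv v y) volume := by
    refine Integrable.mono' (hv2.integrable_sq.add hv'2.integrable_sq) hmeas ?_
    filter_upwards with y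
    rw [Real.norm_eq_abs]
    simp only [Pi.add_apply]
    refine abs_le.mpr ⟨by nlinarith [sq_nonneg (v y + deriv v y)],
      by nlinarith [sq_nonneg (v y - deriv v y)]⟩
  have habs : Integrable (fun y : ℝ => |2 * v y * deriv v y|) volume := hvv'.abs
  refine le_of_forall_pos_le_add fun ε hε => ?_
  have hfin : volume {y : ℝ | ε ≤ v y ^ 2} < ⊤ :=
    hv2.integrable_sq.measure_ge_lt_top hε
  have hns : ¬ (Set.Iio x ⊆ {y : ℝ | ε ≤ v y ^ 2}) := by
    intro hsub
    have h1 : volume (Set.Iio x) ≤ volume {y : ℝ | ε ≤ v y ^ 2} := measure_mono hsub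
    rw [Real.volume_Iio] at h1
    exact absurd (lt_of_le_of_lt h1 hfin) (lt_irrefl ⊤)
  obtain ⟨y, hyx, hyε⟩ : ∃ y, y < x ∧ v y ^ 2 < ε := by
    rw [Set.not_subset] at hns
    obtain ⟨y, hy1, hy2⟩ := hns
    exact ⟨y, hy1, not_le.mp hy2⟩
  have hderiv : ∀ t ∈ Set.uIcc y x, HasDerivAt (fun s => v s ^ 2) (2 * v t * deriv v t) t := by
    intro t _
    have h : HasDerivAt (fun s => v s ^ 2) _ t := (hv t).hasDerivAt.pow 2
    simpa [mul_comm, mul_assoc, mul_left_comm] using h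
  have heq : ∫ t in y..x, 2 * v t * deriv v t = v x ^ 2 - v y ^ 2 :=
    intervalIntegral.integral_eq_sub_of_hasDerivAt hderiv hvv'.intervalIntegrable
  have h2 : ∫ t in y..x, 2 * v t * deriv v t ≤ ∫ t in y..x, |2 * v t * deriv v t| :=
    le_trans (le_abs_self _) (intervalIntegral.abs_integral_le_integral_abs hyx.le)
  have h3 : ∫ t in y..x, |2 * v t * deriv v t| = ∫ t in Set.Ioc y x, |2 * v t * deriv v t| :=
    intervalIntegral.integral_of_le hyx.le
  have h4 : ∫ t in Set.Ioc y x, |2 * v t * deriv v t| ≤ ∫ t : ℝ, |2 * v t * deriv v t| :=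
    setIntegral_le_integral habs (Filter.Eventually.of_forall fun t => abs_nonneg _)
  have : v x ^ 2 = v y ^ 2 + ∫ t in y..x, 2 * v t * deriv v t := by rw [heq]; ring
  rw [this]
  linarith

theorem young_step (p A V B : ℝ) (hp : 1 ≤ p) (hA : 0 ≤ A) (hV : 0 ≤ V) (hB : 0 ≤ B) :
    2 ^ (1/p) * B * A ^ (1/(2*p)) * V ^ (1 - 1/(2*p))
      ≤ A + cp p * B ^ (2*p/(2*p-1)) * V := by
  have hp0 : (0:ℝ) < p := by linarith
  set r : ℝ := 2 * p with hrdef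
  set s : ℝ := 2 * p / (2 * p - 1) with hsdef
  have hr1 : 1 < r := by simp only [hrdef]; linarith
  have hr0 : (0:ℝ) < r := by linarith
  have hs0 : (0:ℝ) < s := by
    apply div_pos <;> [linarith; linarith]
  have h2p : (2*p) ≠ 0 := by positivity
  have h2p1 : (2*p-1) ≠ 0 := by intro h; nlinarith
  have hconj : Real.HolderConjugate r s := Real.holderConjugate_iff.mpr ⟨hr1, by
    simp only [hrdef, hsdef, one_div]
    field_simp; ring⟩
  set a : ℝ := (r * A) ^ (1/r) with hadef
  set b : ℝ := 2 ^ (1/p) * B * V ^ (1 - 1/r) * r ^ (-(1/r)) with hbdef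
  have ha0 : 0 ≤ a := Real.rpow_nonneg (by positivity) _
  have hb0 : 0 ≤ b := by positivity
  have key := Real.young_inequality_of_nonneg ha0 hb0 hconj
  have hab : a * b = 2 ^ (1/p) * B * A ^ (1/(2*p)) * V ^ (1 - 1/(2*p)) := by
    have h1 : a = r ^ (1/r) * A ^ (1/r) := Real.mul_rpow hr0.le hA
    have h2 : (r:ℝ) ^ (1/r) * r ^ (-(1/r)) = 1 := by
      rw [← Real.rpow_add hr0]; simp
    calc a * b = (r ^ (1/r) * r ^ (-(1/r))) * (2 ^ (1/p) * B * A ^ (1/r) * V ^ (1 - 1/r)) := by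
          rw [h1, hbdef]; ring
      _ = 2 ^ (1/p) * B * A ^ (1/(2*p)) * V ^ (1 - 1/(2*p)) := by rw [h2, hrdef]; ring
  have har : a ^ r = r * A := by
    rw [hadef, ← Real.rpow_mul (by positivity), one_div, inv_mul_cancel₀ hr0.ne',
      Real.rpow_one]
  have h2nn : (0:ℝ) ≤ 2 ^ (1/p) * B := by positivity
  have hbs : b ^ s = (2/p) ^ ((1:ℝ)/(2*p-1)) * B ^ s * V := by
    rw [hbdef, Real.mul_rpow (by positivity) (by positivity),
      Real.mul_rpow h2nn (Real.rpow_nonneg hV _),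
      Real.mul_rpow (by positivity) hB,
      ← Real.rpow_mul (by norm_num : (0:ℝ) ≤ 2),
      ← Real.rpow_mul hV, ← Real.rpow_mul hr0.le]
    have e1 : (1 - 1/r) * s = 1 := by
      simp only [hrdef, hsdef]; field_simp
    have e2 : (1/p) * s = 2 * (1/(2*p-1)) := by
      simp only [hsdef]; field_simp
    have e3 : (-(1/r)) * s = -(1/(2*p-1)) := by
      simp only [hrdef, hsdef]; field_simp
    rw [e1, e2, e3, Real.rpow_one]
    set t : ℝ := 1/(2*p-1) with htdef
    have e4 : (2:ℝ) ^ (2 * t) * r ^ (-t) = (2/p) ^ t := by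
      have h6 : (2:ℝ) ^ (2*t) = (4:ℝ) ^ t := by
        have h7 : (2:ℝ) ^ (2*t) = ((2:ℝ) ^ ((2:ℕ):ℝ)) ^ t := by
          rw [← Real.rpow_mul (by norm_num : (0:ℝ) ≤ 2)]; norm_num
        rw [h7, Real.rpow_natCast]; norm_num
      rw [h6, Real.rpow_neg hr0.le, ← div_eq_mul_inv,
        ← Real.div_rpow (by norm_num : (0:ℝ) ≤ 4) hr0.le]
      congr 1
      rw [hrdef]; field_simp; ring
    rw [← e4]; ring
  have hrA : r * A / r = A := by field_simp
  have hsinv : (1:ℝ)/s = 1 - 1/(2*p) := by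
    rw [hsdef]; field_simp
  have hfin : a ^ r / r + b ^ s / s = A + cp p * B ^ (2*p/(2*p-1)) * V := by
    rw [har, hbs, hrA, cp, ← hsinv, ← hsdef]
    field_simp
  rw [hab, hfin] at key
  exact key

theorem interp (p : ℝ) (hp : 1 ≤ p) (β : ℝ → ℝ)
    (hβmem : MemLp β (ENNReal.ofReal p) (volume : Measure ℝ)) (hβ0 : ∀ x, 0 ≤ β x)
    (v : ℝ → ℝ) (hv : Differentiable ℝ v)
    (hv2 : MemLp v 2 (volume : Measure ℝ))
    (hv'2 : MemLp (deriv v) 2 (volume : Measure ℝ)) :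
    Integrable (fun x => β x * v x ^ 2) (volume : Measure ℝ) ∧
    ∫ x : ℝ, β x * v x ^ 2
      ≤ (∫ x : ℝ, (deriv v x) ^ 2)
        + cp p * (Lpnorm p β) ^ (2*p/(2*p-1)) * (∫ x : ℝ, (v x) ^ 2) := by
  have hp0 : (0:ℝ) < p := by linarith
  set I : ℝ := ∫ y : ℝ, |2 * v y * deriv v y| with hIdef
  set A : ℝ := ∫ x : ℝ, (deriv v x) ^ 2 with hAdef
  set V : ℝ := ∫ x : ℝ, (v x) ^ 2 with hVdef
  set B : ℝ := Lpnorm p β with hBdef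
  have hsup : ∀ x, v x ^ 2 ≤ I := gn_bound v hv hv2 hv'2
  have hI0 : 0 ≤ I := integral_nonneg fun x => abs_nonneg _
  have hA0 : 0 ≤ A := integral_nonneg fun x => sq_nonneg _
  have hV0 : 0 ≤ V := integral_nonneg fun x => sq_nonneg _
  have hB0 : 0 ≤ B := ENNReal.toReal_nonneg
  have hv2sq : Integrable (fun x : ℝ => v x ^ 2) volume := hv2.integrable_sq
  have hv'2sq : Integrable (fun x : ℝ => deriv v x ^ 2) volume := hv'2.integrable_sq
  have hvcont : Continuous v := hv.continuous
  have hsqm : AEStronglyMeasurable (fun x : ℝ => v x ^ 2) volume :=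
    (hvcont.pow 2).aestronglyMeasurable
  have hop0 : ENNReal.ofReal p ≠ 0 := ne_of_gt (ENNReal.ofReal_pos.mpr hp0)
  -- B as an integral
  have hB' : B = (∫ x : ℝ, β x ^ p) ^ p⁻¹ := by
    rw [hBdef, Lpnorm, hβmem.eLpNorm_eq_integral_rpow_norm hop0 ENNReal.ofReal_ne_top,
      ENNReal.toReal_ofReal (by positivity), ENNReal.toReal_ofReal hp0.le]
    congr 1
    refine integral_congr_ae (Filter.Eventually.of_forall fun x => ?_)
    simp only [Real.norm_eq_abs]
    rw [abs_of_nonneg (hβ0 x)]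
  -- Step: Cauchy-Schwarz for I
  have hI2 : I ≤ 2 * (V ^ ((1:ℝ)/2) * A ^ ((1:ℝ)/2)) := by
    have h2 : ENNReal.ofReal (2:ℝ) = 2 := by norm_num
    have hconj2 : Real.HolderConjugate 2 2 := Real.holderConjugate_iff.mpr ⟨one_lt_two, by norm_num⟩
    have hvm : MemLp (fun x : ℝ => |v x|) (ENNReal.ofReal (2:ℝ)) volume := by
      rw [h2]; simpa [Real.norm_eq_abs] using hv2.norm
    have hv'm : MemLp (fun x : ℝ => |deriv v x|) (ENNReal.ofReal (2:ℝ)) volume := by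
      rw [h2]; simpa [Real.norm_eq_abs] using hv'2.norm
    have hH := integral_mul_le_Lp_mul_Lq_of_nonneg (μ := volume) hconj2
      (Filter.Eventually.of_forall fun x => abs_nonneg (v x))
      (Filter.Eventually.of_forall fun x => abs_nonneg (deriv v x)) hvm hv'm
    have e1 : ∫ x : ℝ, |v x| ^ (2:ℝ) = V := by
      rw [hVdef]
      refine integral_congr_ae (Filter.Eventually.of_forall fun x => ?_)
      simp [Real.rpow_two, sq_abs]
    have e2 : ∫ x : ℝ, |deriv v x| ^ (2:ℝ) = A := by
      rw [hAdef]
      refine integral_congr_ae (Filter.Eventually.of_forall fun x => ?_)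
      simp [Real.rpow_two, sq_abs]
    rw [e1, e2] at hH
    have e3 : I = 2 * ∫ y : ℝ, |v y| * |deriv v y| := by
      rw [hIdef, ← integral_const_mul]
      refine integral_congr_ae (Filter.Eventually.of_forall fun x => ?_)
      simp only [abs_mul, abs_two]
      ring
    rw [e3]
    have : (1:ℝ)/2 = 1/(2:ℝ) := rfl
    nlinarith [hH]
  -- KEY step
  have hkey : Integrable (fun x => β x * v x ^ 2) (volume : Measure ℝ) ∧
      ∫ x : ℝ, β x * v x ^ 2 ≤ B * I ^ (1/p) * V ^ (1 - 1/p) := by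
    rcases eq_or_lt_of_le hp with h1 | h1
    · -- p = 1
      subst h1
      have hβint : Integrable β volume := by
        rw [← memLp_one_iff_integrable]
        simpa using hβmem
      have hInt : Integrable (fun x => β x * v x ^ 2) volume := by
        refine Integrable.mono' (hβint.mul_const I) (hβmem.1.mul hsqm) ?_
        filter_upwards with x
        rw [Real.norm_eq_abs, abs_of_nonneg (mul_nonneg (hβ0 x) (sq_nonneg _))]
        exact mul_le_mul_of_nonneg_left (hsup x) (hβ0 x)
      refine ⟨hInt, ?_⟩
      have hb : ∫ x : ℝ, β x * v x ^ 2 ≤ ∫ x : ℝ, β x * I := by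
        refine integral_mono hInt (hβint.mul_const I) fun x => ?_
        exact mul_le_mul_of_nonneg_left (hsup x) (hβ0 x)
      rw [integral_mul_const] at hb
      have hB1 : B = ∫ x : ℝ, β x := by
        rw [hB']; simp [Real.rpow_one]
      simp only [one_div, inv_one, Real.rpow_one, sub_self, Real.rpow_zero, mul_one]
      rw [hB1]
      exact hb
    · -- 1 < p
      set q : ℝ := p / (p - 1) with hqdef
      have hp1 : p - 1 ≠ 0 := by intro h; linarith
      have hpq : Real.HolderConjugate p q := Real.holderConjugate_iff.mpr ⟨h1, by
        rw [hqdef]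
        field_simp; ring⟩
      have hq1 : 1 < q := hpq.symm.lt
      have hq0 : (0:ℝ) < q := by linarith
      have hoq0 : ENNReal.ofReal q ≠ 0 := ne_of_gt (ENNReal.ofReal_pos.mpr hq0)
      -- v^2 in L^q
      have hIntq : Integrable (fun x : ℝ => ‖v x ^ 2‖ ^ q) volume := by
        refine Integrable.mono' (hv2sq.const_mul (I ^ (q-1)))
          ((hvcont.pow 2).norm.rpow_const (fun x => Or.inr hq0.le)).aestronglyMeasurable ?_
        filter_upwards with x
        simp only [Real.norm_eq_abs]
        rw [abs_of_nonneg (Real.rpow_nonneg (abs_nonneg _) _), abs_of_nonneg (sq_nonneg _)]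
        have h8 : (v x ^ 2 : ℝ) ^ q = (v x ^ 2) ^ (q - 1) * (v x ^ 2) ^ (1:ℝ) := by
          rw [← Real.rpow_add' (sq_nonneg _) (by rw [sub_add_cancel]; exact hq0.ne')]
          norm_num
        rw [h8, Real.rpow_one]
        exact mul_le_mul_of_nonneg_right
          (Real.rpow_le_rpow (sq_nonneg _) (hsup x) (by linarith)) (sq_nonneg _)
      have hv2q : MemLp (fun x : ℝ => v x ^ 2) (ENNReal.ofReal q) volume := by
        have hiff := memLp_norm_rpow_iff (p := ENNReal.ofReal q) (q := ENNReal.ofReal q)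
          hsqm hoq0 ENNReal.ofReal_ne_top
        rw [ENNReal.div_self hoq0 ENNReal.ofReal_ne_top, ENNReal.toReal_ofReal hq0.le,
          memLp_one_iff_integrable] at hiff
        exact hiff.mp hIntq
      have harith : (1:ℝ≥0∞)/1 = 1/ENNReal.ofReal p + 1/ENNReal.ofReal q := by
        simp only [one_div]
        rw [← ENNReal.ofReal_inv_of_pos hp0, ← ENNReal.ofReal_inv_of_pos hq0,
          ← ENNReal.ofReal_add (by positivity) (by positivity)]
        have hsum : p⁻¹ + q⁻¹ = 1 := hpq.inv_add_inv_eq_one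
        rw [hsum]
        simp
      haveI : ENNReal.HolderTriple (ENNReal.ofReal p) (ENNReal.ofReal q) 1 :=
        ENNReal.holderConjugate_iff.mpr (by simp only [one_div, inv_one] at harith; exact harith.symm)
      have hsm := MemLp.smul (r := 1) hv2q hβmem
      have hInt : Integrable (fun x => β x * v x ^ 2) volume := by
        rw [← memLp_one_iff_integrable]
        exact hsm
      refine ⟨hInt, ?_⟩
      have hH := integral_mul_le_Lp_mul_Lq_of_nonneg (μ := volume) hpq
        (Filter.Eventually.of_forall hβ0)
        (Filter.Eventually.of_forall fun x => sq_nonneg (v x)) hβmem hv2q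
      have hptw : ∀ x : ℝ, (v x ^ 2 : ℝ) ^ q ≤ I ^ (q - 1) * v x ^ 2 := by
        intro x
        have h8 : (v x ^ 2 : ℝ) ^ q = (v x ^ 2) ^ (q - 1) * (v x ^ 2) ^ (1:ℝ) := by
          rw [← Real.rpow_add' (sq_nonneg _) (by rw [sub_add_cancel]; exact hq0.ne')]
          norm_num
        rw [h8, Real.rpow_one]
        exact mul_le_mul_of_nonneg_right
          (Real.rpow_le_rpow (sq_nonneg _) (hsup x) (by linarith)) (sq_nonneg _)
      have hmono : ∫ x : ℝ, (v x ^ 2) ^ q ≤ I ^ (q - 1) * V := by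
        have hm := integral_mono_of_nonneg
          (Filter.Eventually.of_forall fun x => Real.rpow_nonneg (sq_nonneg (v x)) q)
          (hv2sq.const_mul (I ^ (q-1)))
          (Filter.Eventually.of_forall hptw)
        rwa [integral_const_mul] at hm
      have hicc : (1:ℝ)/p + 1/q = 1 := by
        rw [one_div, one_div]; exact hpq.inv_add_inv_eq_one
      have eq2 : (1:ℝ)/q = 1 - 1/p := by linarith
      have eq1 : (q - 1) * (1/q) = 1/p := by
        have hqq : q * (1/q) = 1 := by field_simp
        have : (q - 1) * (1/q) = q * (1/q) - 1/q := by ring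
        rw [this, hqq]
        linarith
      have hβp0 : (0:ℝ) ≤ (∫ x : ℝ, β x ^ p) := integral_nonneg fun x => Real.rpow_nonneg (hβ0 x) p
      calc ∫ x : ℝ, β x * v x ^ 2
          ≤ (∫ x : ℝ, β x ^ p) ^ (1/p) * (∫ x : ℝ, (v x ^ 2) ^ q) ^ (1/q) := hH
        _ ≤ (∫ x : ℝ, β x ^ p) ^ (1/p) * (I ^ (q-1) * V) ^ (1/q) := by
            refine mul_le_mul_of_nonneg_left ?_ (Real.rpow_nonneg hβp0 _)
            exact Real.rpow_le_rpow
              (integral_nonneg fun x => Real.rpow_nonneg (sq_nonneg (v x)) q)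
              hmono (by positivity)
        _ = B * I ^ (1/p) * V ^ (1 - 1/p) := by
            rw [Real.mul_rpow (Real.rpow_nonneg hI0 _) hV0, ← Real.rpow_mul hI0,
              eq1, eq2, hB', ← one_div]
            ring
  obtain ⟨hInt, hkey2⟩ := hkey
  refine ⟨hInt, ?_⟩
  calc ∫ x : ℝ, β x * v x ^ 2 ≤ B * I ^ (1/p) * V ^ (1 - 1/p) := hkey2
    _ ≤ B * (2 * (V ^ ((1:ℝ)/2) * A ^ ((1:ℝ)/2))) ^ (1/p) * V ^ (1 - 1/p) := by
        refine mul_le_mul_of_nonneg_right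
          (mul_le_mul_of_nonneg_left
            (Real.rpow_le_rpow hI0 hI2 (by positivity)) hB0)
          (Real.rpow_nonneg hV0 _)
    _ = 2 ^ (1/p) * B * A ^ (1/(2*p)) * V ^ (1 - 1/(2*p)) := by
        rw [Real.mul_rpow (by norm_num : (0:ℝ) ≤ 2) (by positivity),
          Real.mul_rpow (Real.rpow_nonneg hV0 _) (Real.rpow_nonneg hA0 _),
          ← Real.rpow_mul hV0, ← Real.rpow_mul hA0]
        have eA : (1:ℝ)/2 * (1/p) = 1/(2*p) := by ring
        have eV : V ^ ((1:ℝ)/2 * (1/p)) * V ^ (1 - 1/p) = V ^ (1 - 1/(2*p)) := by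
          have h1p : 1/p ≤ 1 := by rw [div_le_one hp0]; linarith
          rw [← Real.rpow_add' hV0 (by intro hzero; linarith [h1p])]
          congr 1
          field_simp
          ring
        rw [eA]
        calc B * (2 ^ (1/p) * (V ^ (1/(2*p)) * A ^ (1/(2*p)))) * V ^ (1 - 1/p)
            = 2 ^ (1/p) * B * A ^ (1/(2*p)) * (V ^ ((1:ℝ)/2 * (1/p)) * V ^ (1 - 1/p)) := by
              rw [eA]; ring
          _ = 2 ^ (1/p) * B * A ^ (1/(2*p)) * V ^ (1 - 1/(2*p)) := by rw [eV]
    _ ≤ A + cp p * B ^ (2*p/(2*p-1)) * V := young_step p A V B hp hA0 hV0 hB0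

/-- Core dissipation inequality for the delayed feedback (heart of the proof of
Theorem 2.3). -/
theorem core_dissipation_inequality
    (τ : ℝ) (hτ : 0 < τ)
    (p : ℝ) (hp : 1 ≤ p)
    (l0 l : ℝ → ℝ)
    (hl0 : MemLp l0 ⊤ (volume : Measure ℝ)) (hl : MemLp l ⊤ (volume : Measure ℝ))
    (α₀ : ℝ) (hα₀ : 0 < α₀)
    (hlower : ∀ᵐ x : ℝ ∂(volume : Measure ℝ), α₀ ≤ l0 x)
    (α : ℝ) (hα : 0 ≤ α)
    (β : ℝ → ℝ) (hβmem : MemLp β (ENNReal.ofReal p) (volume : Measure ℝ))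
    (hβ0 : ∀ x, 0 ≤ β x)
    (hlbound : ∀ᵐ x : ℝ ∂(volume : Measure ℝ),
      (Real.exp τ + 1) / 2 * |l x| ≤ α + β x)
    (v : ℝ → ℝ) (hv : Differentiable ℝ v)
    (hv2 : MemLp v 2 (volume : Measure ℝ))
    (hv'2 : MemLp (deriv v) 2 (volume : Measure ℝ))
    (w : ℝ → ℝ) (hw : MemLp w 2 (volume : Measure ℝ)) :
    -(∫ x : ℝ, (deriv v x) ^ 2) - (∫ x : ℝ, l0 x * (v x) ^ 2)
        - (∫ x : ℝ, l x * w x * v x)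
        + (1 / 2) * (∫ x : ℝ, |l x| * (v x) ^ 2)
        - (Real.exp (-τ) / 2) * (∫ x : ℝ, |l x| * (w x) ^ 2)
      ≤ -(α₀ - α - cp p * (Lpnorm p β) ^ (2 * p / (2 * p - 1))) * ∫ x : ℝ, (v x) ^ 2 := by
  obtain ⟨hβv2, hinterp⟩ := interp p hp β hβmem hβ0 v hv hv2 hv'2
  have hv2sq : Integrable (fun x : ℝ => v x ^ 2) volume := hv2.integrable_sq
  have hw2sq : Integrable (fun x : ℝ => w x ^ 2) volume := hw.integrable_sq
  have hv'2sq : Integrable (fun x : ℝ => deriv v x ^ 2) volume := hv'2.integrable_sq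
  -- bounds for l and l0
  obtain ⟨Cl, hCl⟩ : ∃ C : ℝ, ∀ᵐ x : ℝ ∂(volume : Measure ℝ), ‖l x‖ ≤ C := by
    have h := hl.2
    rw [eLpNorm_exponent_top, eLpNormEssSup_lt_top_iff_isBoundedUnder] at h
    obtain ⟨C, hC⟩ := h
    refine ⟨C, ?_⟩
    filter_upwards [hC] with x hx
    exact_mod_cast hx
  obtain ⟨C0, hC0⟩ : ∃ C : ℝ, ∀ᵐ x : ℝ ∂(volume : Measure ℝ), ‖l0 x‖ ≤ C := by
    have h := hl0.2
    rw [eLpNorm_exponent_top, eLpNormEssSup_lt_top_iff_isBoundedUnder] at h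
    obtain ⟨C, hC⟩ := h
    refine ⟨C, ?_⟩
    filter_upwards [hC] with x hx
    exact_mod_cast hx
  -- integrability
  have hwv : Integrable (fun x : ℝ => w x * v x) volume := by
    refine Integrable.mono' (hw2sq.add hv2sq) (hw.1.mul hv2.1) ?_
    filter_upwards with x
    rw [Real.norm_eq_abs]
    simp only [Pi.add_apply]
    refine abs_le.mpr ⟨by nlinarith [sq_nonneg (w x + v x)], by nlinarith [sq_nonneg (w x - v x)]⟩
  have hlwv : Integrable (fun x : ℝ => l x * w x * v x) volume := by
    have h := Integrable.bdd_mul (c := Cl) hwv hl.1 hCl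
    refine h.congr (Filter.Eventually.of_forall fun x => ?_)
    ring
  have habsm : AEStronglyMeasurable (fun x : ℝ => |l x|) volume :=
    hl.1.norm.congr (Filter.EventuallyEq.of_eq (funext fun x => Real.norm_eq_abs (l x)))
  have habsm0 : AEStronglyMeasurable (fun x : ℝ => |l0 x|) volume :=
    hl0.1.norm.congr (Filter.EventuallyEq.of_eq (funext fun x => Real.norm_eq_abs (l0 x)))
  have hCl' : ∀ᵐ x : ℝ ∂(volume : Measure ℝ), ‖|l x|‖ ≤ Cl := by
    filter_upwards [hCl] with x hx
    rwa [Real.norm_eq_abs, abs_abs, ← Real.norm_eq_abs]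
  have hlv2 : Integrable (fun x : ℝ => |l x| * v x ^ 2) volume :=
    Integrable.bdd_mul (c := Cl) hv2sq habsm hCl'
  have hlw2 : Integrable (fun x : ℝ => |l x| * w x ^ 2) volume :=
    Integrable.bdd_mul (c := Cl) hw2sq habsm hCl'
  have hl0v2 : Integrable (fun x : ℝ => l0 x * v x ^ 2) volume :=
    Integrable.bdd_mul (c := C0) hv2sq hl0.1 hC0
  -- Step 1 : α₀ V ≤ ∫ l0 v²
  have hstep1 : α₀ * ∫ x : ℝ, v x ^ 2 ≤ ∫ x : ℝ, l0 x * v x ^ 2 := by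
    rw [← integral_const_mul]
    refine integral_mono_ae (hv2sq.const_mul α₀) hl0v2 ?_
    filter_upwards [hlower] with x hx
    exact mul_le_mul_of_nonneg_right hx (sq_nonneg _)
  -- Step 2
  have hαβv2 : Integrable (fun x : ℝ => (α + β x) * v x ^ 2) volume := by
    have h := (hv2sq.const_mul α).add hβv2
    refine h.congr (Filter.Eventually.of_forall fun x => ?_)
    simp only [Pi.add_apply]
    ring
  have hstep2 : -(∫ x : ℝ, l x * w x * v x)
      + (1 / 2) * (∫ x : ℝ, |l x| * v x ^ 2)
      - (Real.exp (-τ) / 2) * (∫ x : ℝ, |l x| * w x ^ 2)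
      ≤ α * (∫ x : ℝ, v x ^ 2) + ∫ x : ℝ, β x * v x ^ 2 := by
    have hGint : Integrable (fun x : ℝ => -(l x * w x * v x)
        + (1 / 2) * (|l x| * v x ^ 2) - (Real.exp (-τ) / 2) * (|l x| * w x ^ 2)) volume :=
      (hlwv.neg.add (hlv2.const_mul (1/2))).sub (hlw2.const_mul (Real.exp (-τ) / 2))
    have hGle : ∫ x : ℝ, (-(l x * w x * v x)
        + (1 / 2) * (|l x| * v x ^ 2) - (Real.exp (-τ) / 2) * (|l x| * w x ^ 2))
        ≤ ∫ x : ℝ, (α + β x) * v x ^ 2 := by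
      refine integral_mono_ae hGint hαβv2 ?_
      filter_upwards [hlbound] with x hlb
      have hprod : Real.exp (-τ/2) * Real.exp (τ/2) = 1 := by
        rw [← Real.exp_add]; ring_nf; exact Real.exp_zero
      have hsq1 : (Real.exp (-τ/2)) ^ 2 = Real.exp (-τ) := by
        rw [sq, ← Real.exp_add]; ring_nf
      have hsq2 : (Real.exp (τ/2)) ^ 2 = Real.exp τ := by
        rw [sq, ← Real.exp_add]; ring_nf
      have h2ab := two_mul_le_add_sq (Real.exp (-τ/2) * |w x|) (Real.exp (τ/2) * |v x|)
      have e1 : 2 * (Real.exp (-τ/2) * |w x|) * (Real.exp (τ/2) * |v x|)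
          = 2 * (|w x| * |v x|) := by
        calc 2 * (Real.exp (-τ/2) * |w x|) * (Real.exp (τ/2) * |v x|)
            = 2 * (Real.exp (-τ/2) * Real.exp (τ/2)) * (|w x| * |v x|) := by ring
          _ = 2 * (|w x| * |v x|) := by rw [hprod]; ring
      have e2 : (Real.exp (-τ/2) * |w x|) ^ 2 = Real.exp (-τ) * w x ^ 2 := by
        rw [mul_pow, hsq1, sq_abs]
      have e3 : (Real.exp (τ/2) * |v x|) ^ 2 = Real.exp τ * v x ^ 2 := by
        rw [mul_pow, hsq2, sq_abs]
      rw [e1, e2, e3] at h2ab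
      have habs : -(l x * w x * v x) ≤ |l x| * (|w x| * |v x|) := by
        calc -(l x * w x * v x) ≤ |l x * w x * v x| := neg_le_abs _
          _ = |l x| * (|w x| * |v x|) := by rw [abs_mul, abs_mul]; ring
      have hb1 : |l x| * (2 * (|w x| * |v x|))
          ≤ |l x| * (Real.exp (-τ) * w x ^ 2 + Real.exp τ * v x ^ 2) :=
        mul_le_mul_of_nonneg_left h2ab (abs_nonneg _)
      have hb2 : ((Real.exp τ + 1) / 2 * |l x|) * v x ^ 2 ≤ (α + β x) * v x ^ 2 :=
        mul_le_mul_of_nonneg_right hlb (sq_nonneg _)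
      nlinarith [habs, hb1, hb2, abs_nonneg (l x), abs_nonneg (w x), abs_nonneg (v x)]
    have hGeq : ∫ x : ℝ, (-(l x * w x * v x)
        + (1 / 2) * (|l x| * v x ^ 2) - (Real.exp (-τ) / 2) * (|l x| * w x ^ 2))
        = -(∫ x : ℝ, l x * w x * v x)
          + (1 / 2) * (∫ x : ℝ, |l x| * v x ^ 2)
          - (Real.exp (-τ) / 2) * (∫ x : ℝ, |l x| * w x ^ 2) := by
      have h1 : Integrable (fun x : ℝ => -(l x * w x * v x)) volume := hlwv.neg
      have h12 : Integrable (fun x : ℝ => -(l x * w x * v x)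
          + 1 / 2 * (|l x| * v x ^ 2)) volume := h1.add (hlv2.const_mul (1/2))
      have h3 : Integrable (fun x : ℝ => Real.exp (-τ) / 2 * (|l x| * w x ^ 2)) volume :=
        hlw2.const_mul _
      rw [integral_sub h12 h3, integral_add h1 (hlv2.const_mul (1/2)), integral_neg,
        integral_const_mul, integral_const_mul]
    have hαβeq : ∫ x : ℝ, (α + β x) * v x ^ 2
        = α * (∫ x : ℝ, v x ^ 2) + ∫ x : ℝ, β x * v x ^ 2 := by
      rw [← integral_const_mul, ← integral_add (hv2sq.const_mul α) hβv2]
      refine integral_congr_ae (Filter.Eventually.of_forall fun x => ?_)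
      ring
    rw [hGeq, hαβeq] at hGle
    exact hGle
  have hV0 : 0 ≤ ∫ x : ℝ, v x ^ 2 := integral_nonneg fun x => sq_nonneg _
  linarith [hstep1, hstep2, hinterp]
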